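/- arXiv:1102.5585 — 6 statements merged into one kernel-verified Lean document; each statement's English description precedes it below -/
import Mathlib

section
/- Let N be a two-level PT-net system with transition set T = L ∪ H, and let N' be any high-level net system whose set of transitions H' does not intersect L and whose set of places is disjoint from that of N. Then, taking Σ_o = L as the set of observable transitions in all three systems, N\H is weakly simulated by (N|N')\(H\H'), which in turn is weakly simulated by N. -/
/-! ## Labelled transition systems -/

structure LTS (Q : Type _) (A : Type _) where
  init : Q
  tr : Q → A → Q → Prop

namespace LTS

variable {Q Q' A : Type _}

/-- One unobservable step. -/
def TauStep (S : LTS Q A) (Obs : Set A) (q q' : Q) : Prop :=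
  ∃ τ, τ ∉ Obs ∧ S.tr q τ q'

/-- `q →* q'` : reflexive-transitive closure of unobservable steps. -/
def TauStar (S : LTS Q A) (Obs : Set A) : Q → Q → Prop :=
  Relation.ReflTransGen (S.TauStep Obs)

/-- Weak steps producing a word of observable labels. -/
inductive WeakSteps (S : LTS Q A) (Obs : Set A) : Q → List A → Q → Prop
  | nil (q : Q) : WeakSteps S Obs q [] q
  | tau {q q' q'' : Q} {w : List A} {τ : A} :
      τ ∉ Obs → S.tr q τ q' → WeakSteps S Obs q' w q'' → WeakSteps S Obs q w q''
  | obs {q q' q'' : Q} {w : List A} {σ : A} :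
      σ ∈ Obs → S.tr q σ q' → WeakSteps S Obs q' w q'' → WeakSteps S Obs q (σ :: w) q''

/-- The language of a partially observed LTS. -/
def lang (S : LTS Q A) (Obs : Set A) : Set (List A) :=
  { w | ∃ q, S.WeakSteps Obs S.init w q }

end LTS

/-- `R` is a weak simulation of `S` by `S'`. -/
def IsWeakSimulation {Q Q' A : Type _} (Obs : Set A) (S : LTS Q A) (S' : LTS Q' A)
    (R : Q → Q' → Prop) : Prop :=
  R S.init S'.init ∧
  ∀ q1 q1', R q1 q1' →
    (∀ σ ∈ Obs, ∀ q2, S.tr q1 σ q2 →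
      ∃ q1'' q2'' q2', S'.TauStar Obs q1' q1'' ∧ S'.tr q1'' σ q2'' ∧
        S'.TauStar Obs q2'' q2' ∧ R q2 q2') ∧
    (∀ τ ∉ Obs, ∀ q2, S.tr q1 τ q2 →
      ∃ q2', S'.TauStar Obs q1' q2' ∧ R q2 q2')

/-- `S` is weakly simulated by `S'`. -/
def WeaklySimulated {Q Q' A : Type _} (Obs : Set A) (S : LTS Q A) (S' : LTS Q' A) : Prop :=
  ∃ R, IsWeakSimulation Obs S S' R

/-- `R` is a weak bisimulation between `S` and `S'`. -/
def IsWeakBisimulation {Q Q' A : Type _} (Obs : Set A) (S : LTS Q A) (S' : LTS Q' A)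
    (R : Q → Q' → Prop) : Prop :=
  IsWeakSimulation Obs S S' R ∧ IsWeakSimulation Obs S' S (fun q' q => R q q')

/-- `S` and `S'` are weakly bisimilar. -/
def WeaklyBisimilar {Q Q' A : Type _} (Obs : Set A) (S : LTS Q A) (S' : LTS Q' A) : Prop :=
  ∃ R, IsWeakBisimulation Obs S S' R

/-! ## Place/Transition Petri nets -/

/-- A PT-net over a universe `P` of places and `Tr` of transitions:
a finite set of places, a finite set of transitions, and input/output flows.
Flows of non-transitions vanish. -/
structure PTNet (P : Type _) (Tr : Type _) where
  places : Finset P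
  transitions : Finset Tr
  pre : Tr → P → ℕ
  post : Tr → P → ℕ
  pre_eq_zero : ∀ t ∉ transitions, ∀ p, pre t p = 0
  post_eq_zero : ∀ t ∉ transitions, ∀ p, post t p = 0

namespace PTNet

variable {P Tr : Type _} [DecidableEq P] [DecidableEq Tr]

/-- `M[t⟩` : transition `t` is enabled at marking `M`. -/
def Enabled (N : PTNet P Tr) (M : P → ℕ) (t : Tr) : Prop :=
  t ∈ N.transitions ∧ ∀ p ∈ N.places, N.pre t p ≤ M p

/-- The marking obtained by firing `t` at `M`. -/
def fire (N : PTNet P Tr) (M : P → ℕ) (t : Tr) : P → ℕ :=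
  fun p => if p ∈ N.places then M p + N.post t p - N.pre t p else M p

/-- `M[t⟩M'`. -/
def Fires (N : PTNet P Tr) (M : P → ℕ) (t : Tr) (M' : P → ℕ) : Prop :=
  N.Enabled M t ∧ M' = N.fire M t

/-- `M[s⟩M'` for a sequence `s` of transitions. -/
def FiresSeq (N : PTNet P Tr) : (P → ℕ) → List Tr → (P → ℕ) → Prop
  | M, [], M' => M' = M
  | M, t :: s, M' => ∃ M'', N.Fires M t M'' ∧ N.FiresSeq M'' s M'

/-- `M'` is reachable from `M`. -/
def Reachable (N : PTNet P Tr) (M M' : P → ℕ) : Prop :=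
  ∃ s, N.FiresSeq M s M'

/-- The restriction `N \ T'` of a net: the transitions in `T'` are removed. -/
def restrict (N : PTNet P Tr) (T' : Finset Tr) : PTNet P Tr where
  places := N.places
  transitions := N.transitions \ T'
  pre := fun t p => if t ∈ N.transitions \ T' then N.pre t p else 0
  post := fun t p => if t ∈ N.transitions \ T' then N.post t p else 0
  pre_eq_zero := by intro t ht p; simp [ht]
  post_eq_zero := by intro t ht p; simp [ht]

/-- The composition `N1 | N2` of two nets (intended for disjoint place sets);
shared transitions synchronize. -/
def comp (N1 N2 : PTNet P Tr) : PTNet P Tr where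
  places := N1.places ∪ N2.places
  transitions := N1.transitions ∪ N2.transitions
  pre := fun t p => if p ∈ N1.places then N1.pre t p else N2.pre t p
  post := fun t p => if p ∈ N1.places then N1.post t p else N2.post t p
  pre_eq_zero := by
    intro t ht p
    simp only [Finset.mem_union, not_or] at ht
    by_cases hp : p ∈ N1.places <;>
      simp [hp, N1.pre_eq_zero t ht.1, N2.pre_eq_zero t ht.2]
  post_eq_zero := by
    intro t ht p
    simp only [Finset.mem_union, not_or] at ht
    by_cases hp : p ∈ N1.places <;>
      simp [hp, N1.post_eq_zero t ht.1, N2.post_eq_zero t ht.2]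

/-- The union of two initial markings (agrees with `M1` on the places of `N1`,
with `M2` elsewhere). -/
def combine (N1 : PTNet P Tr) (M1 M2 : P → ℕ) : P → ℕ :=
  fun p => if p ∈ N1.places then M1 p else M2 p

/-- The reachability graph of a marked net, as an LTS on markings. -/
def toLTS (N : PTNet P Tr) (M0 : P → ℕ) : LTS (P → ℕ) Tr where
  init := M0
  tr := fun M t M' => N.Fires M t M'

/-- The language of the net system `(N, M0)` whose observable transitions are
those in `L` (labelled by themselves): projections of firing sequences onto `L*`. -/
def lang (N : PTNet P Tr) (M0 : P → ℕ) (L : Finset Tr) : Set (List Tr) :=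
  { w | ∃ s M, N.FiresSeq M0 s M ∧ s.filter (· ∈ L) = w }

/-- The free language of the net system `(N, M0)`: all of its firing sequences. -/
def freeLang (N : PTNet P Tr) (M0 : P → ℕ) : Set (List Tr) :=
  { s | ∃ M, N.FiresSeq M0 s M }

/-- The net with given places and transitions and empty flow. -/
def ofSets (Pl : Finset P) (Ts : Finset Tr) : PTNet P Tr where
  places := Pl
  transitions := Ts
  pre := fun _ _ => 0
  post := fun _ _ => 0
  pre_eq_zero := fun _ _ _ => rfl
  post_eq_zero := fun _ _ _ => rfl

end PTNet

/-! ## Non-interference properties -/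

section Security

variable {P Tr : Type _} [DecidableEq P] [DecidableEq Tr]

/-- Non-Deducibility on Compositions: for every high-level net system `N'`
(with any initial marking `M0'`) whose places are disjoint from those of `N` and
whose transitions avoid `L`, the systems `N \ H` and `(N | N') \ (H \ H')` are
language equivalent, the observable transitions being those in `L`. -/
def NDC (N : PTNet P Tr) (M0 : P → ℕ) (L H : Finset Tr) : Prop :=
  ∀ (N' : PTNet P Tr) (M0' : P → ℕ),
    Disjoint N.places N'.places → Disjoint N'.transitions L →
    (N.restrict H).lang M0 L =
      ((N.comp N').restrict (H \ N'.transitions)).lang (N.combine M0 M0') L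

/-- Bisimulation-based Non-Deducibility on Compositions: as `NDC`, but with
weak bisimilarity in place of language equivalence. -/
def BNDC (N : PTNet P Tr) (M0 : P → ℕ) (L H : Finset Tr) : Prop :=
  ∀ (N' : PTNet P Tr) (M0' : P → ℕ),
    Disjoint N.places N'.places → Disjoint N'.transitions L →
    WeaklyBisimilar (L : Set Tr) ((N.restrict H).toLTS M0)
      (((N.comp N').restrict (H \ N'.transitions)).toLTS (N.combine M0 M0'))

/-- Strong BNDC: whenever a reachable marking `M1` enables a high transition `h`
with `M1[h⟩M2`, the systems `(N \ H, M1)` and `(N \ H, M2)` are weakly bisimilar. -/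
def SBNDC (N : PTNet P Tr) (M0 : P → ℕ) (L H : Finset Tr) : Prop :=
  ∀ M1 h M2, N.Reachable M0 M1 → h ∈ H → N.Fires M1 h M2 →
    WeaklyBisimilar (L : Set Tr) ((N.restrict H).toLTS M1) ((N.restrict H).toLTS M2)

/-- The least relation generated from `M0 R M0` by:
(i) if `M1 R M2` and `M2[h⟩M2'` with `h ∈ H` then `M1 R M2'`;
(ii) if `M1 R M2`, `M1[l⟩M1'` (in `N \ H`) and `M2[l⟩M2'` with `l ∈ L`
then `M1' R M2'`. -/
inductive RRel (N : PTNet P Tr) (M0 : P → ℕ) (L H : Finset Tr) : (P → ℕ) → (P → ℕ) → Prop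
  | base : RRel N M0 L H M0 M0
  | high {M1 M2 M2' : P → ℕ} {h : Tr} : h ∈ H → RRel N M0 L H M1 M2 →
      N.Fires M2 h M2' → RRel N M0 L H M1 M2'
  | low {M1 M2 M1' M2' : P → ℕ} {l : Tr} : l ∈ L → RRel N M0 L H M1 M2 →
      (N.restrict H).Fires M1 l M1' → N.Fires M2 l M2' → RRel N M0 L H M1' M2'

/-- The property `P(h,l)`: for all `w ∈ (L ∪ H)*` and `s ∈ L*`, if `M0[w⟩M1`,
`M1[h⟩M2`, `M1[s⟩M3` and `M2[s⟩M4`, then `M3[l⟩` iff `M4[l⟩`. -/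
def PropP (N : PTNet P Tr) (M0 : P → ℕ) (L H : Finset Tr) (h l : Tr) : Prop :=
  ∀ (w s : List Tr) (M1 M2 M3 M4 : P → ℕ),
    (∀ t ∈ w, t ∈ L ∪ H) → (∀ t ∈ s, t ∈ L) →
    N.FiresSeq M0 w M1 → N.Fires M1 h M2 →
    N.FiresSeq M1 s M3 → N.FiresSeq M2 s M4 →
    (N.Enabled M3 l ↔ N.Enabled M4 l)

/-- Intransitive Non-Interference for a three-level net system:
`(N \ D, M)` has NDC (w.r.t. low `L`, high `H`) for `M = M0` and for every
marking `M` with `M0[υd⟩M` in `N`, `d ∈ D`. -/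
def INI (N : PTNet P Tr) (M0 : P → ℕ) (L D H : Finset Tr) : Prop :=
  NDC (N.restrict D) M0 L H ∧
  ∀ (υ : List Tr) (d : Tr) (M : P → ℕ), d ∈ D → N.FiresSeq M0 (υ ++ [d]) M →
    NDC (N.restrict D) M L H

/-- Bisimulation-based Intransitive Non-Interference: as `INI` with `BNDC`. -/
def BINI (N : PTNet P Tr) (M0 : P → ℕ) (L D H : Finset Tr) : Prop :=
  BNDC (N.restrict D) M0 L H ∧
  ∀ (υ : List Tr) (d : Tr) (M : P → ℕ), d ∈ D → N.FiresSeq M0 (υ ++ [d]) M →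
    BNDC (N.restrict D) M L H

/-- The property `Q(h,l)`: for all `χ ∈ T*` and `s ∈ L*`, if `M0[χ⟩M1`,
`M1[h⟩M2`, `M1[s⟩M3` and `M2[s⟩M4`, then `M3[l⟩` iff `M4[l⟩`. -/
def PropQ (N : PTNet P Tr) (M0 : P → ℕ) (L : Finset Tr) (h l : Tr) : Prop :=
  ∀ (χ s : List Tr) (M1 M2 M3 M4 : P → ℕ),
    (∀ t ∈ χ, t ∈ N.transitions) → (∀ t ∈ s, t ∈ L) →
    N.FiresSeq M0 χ M1 → N.Fires M1 h M2 →
    N.FiresSeq M1 s M3 → N.FiresSeq M2 s M4 →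
    (N.Enabled M3 l ↔ N.Enabled M4 l)

end Security

section Helpers

variable {P Tr : Type _} [DecidableEq P] [DecidableEq Tr]

lemma restrict_pre_of_mem (N : PTNet P Tr) (T' : Finset Tr) {t : Tr}
    (h : t ∈ N.transitions \ T') : (N.restrict T').pre t = N.pre t := by
  funext p
  show (if t ∈ N.transitions \ T' then N.pre t p else 0) = N.pre t p
  rw [if_pos h]

lemma restrict_post_of_mem (N : PTNet P Tr) (T' : Finset Tr) {t : Tr}
    (h : t ∈ N.transitions \ T') : (N.restrict T').post t = N.post t := by
  funext p
  show (if t ∈ N.transitions \ T' then N.post t p else 0) = N.post t p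
  rw [if_pos h]

end Helpers

/-- `N \ H` is weakly simulated by `(N | N') \ (H \ H')`, which in
turn is weakly simulated by `N`, with observable transitions `Σ_o = L`. -/
theorem weaklySimulated_chain
    {P Tr : Type _} [DecidableEq P] [DecidableEq Tr]
    (N : PTNet P Tr) (M0 : P → ℕ) (L H : Finset Tr)
    (hT : N.transitions = L ∪ H) (hLH : Disjoint L H)
    (N' : PTNet P Tr) (M0' : P → ℕ)
    (hP : Disjoint N.places N'.places) (hH' : Disjoint N'.transitions L) :
    WeaklySimulated (L : Set Tr) ((N.restrict H).toLTS M0)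
      (((N.comp N').restrict (H \ N'.transitions)).toLTS (N.combine M0 M0')) ∧
    WeaklySimulated (L : Set Tr)
      (((N.comp N').restrict (H \ N'.transitions)).toLTS (N.combine M0 M0'))
      (N.toLTS M0) := by
  constructor
  · -- N \ H weakly simulated by (N | N') \ (H \ H')
    refine ⟨fun M Mc => ∀ p ∈ N.places, Mc p = M p, ?_, ?_⟩
    · intro p hp
      simp [PTNet.toLTS, PTNet.combine, hp]
    · intro M Mc hR
      constructor
      · intro σ hσ M2 hfire
        simp only [Finset.coe_sort_coe, Finset.mem_coe] at hσ
        obtain ⟨⟨hmem, hen⟩, heq⟩ := hfire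
        simp only [PTNet.restrict, Finset.mem_sdiff] at hmem hen
        have hσN : σ ∈ N.transitions := hmem.1
        have hσnH : σ ∉ H := hmem.2
        have hσnN' : σ ∉ N'.transitions := fun h => absurd hσ (Finset.disjoint_left.mp hH' h)
        set NC := (N.comp N').restrict (H \ N'.transitions) with hNC
        have hmemC : σ ∈ NC.transitions := by
          simp [hNC, PTNet.restrict, PTNet.comp, hσN, hσnH]
        have hcond : σ ∈ (N.comp N').transitions \ (H \ N'.transitions) := by
          simp [PTNet.comp, hσN, hσnH]
        have hpreC : NC.pre σ = (N.comp N').pre σ := by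
          rw [hNC, restrict_pre_of_mem _ _ hcond]
        have hpostC : NC.post σ = (N.comp N').post σ := by
          rw [hNC, restrict_post_of_mem _ _ hcond]
        refine ⟨Mc, NC.fire Mc σ, NC.fire Mc σ,
          Relation.ReflTransGen.refl, ⟨⟨hmemC, ?_⟩, rfl⟩,
          Relation.ReflTransGen.refl, ?_⟩
        · intro p hp
          have hpre : NC.pre σ p = if p ∈ N.places then N.pre σ p else N'.pre σ p := by
            rw [hpreC]; rfl
          rw [hpre]
          by_cases hpN : p ∈ N.places
          · rw [if_pos hpN, hR p hpN]
            have := hen p hpN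
            simpa [PTNet.restrict, hσN, hσnH] using this
          · rw [if_neg hpN]
            simp [N'.pre_eq_zero σ hσnN']
        · intro p hp
          have hpC : p ∈ (N.comp N').places := by
            simp [PTNet.comp, hp]
          have hpre : NC.pre σ p = N.pre σ p := by
            rw [hpreC]; simp [PTNet.comp, hp]
          have hpost : NC.post σ p = N.post σ p := by
            rw [hpostC]; simp [PTNet.comp, hp]
          have hplC : NC.places = (N.comp N').places := rfl
          rw [heq]
          simp only [PTNet.fire, hplC, hpC, if_pos, hpre, hpost]
          simp [PTNet.restrict, hp, hσN, hσnH, hR p hp]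
      · intro τ hτ M2 hfire
        exfalso
        obtain ⟨⟨hmem, _⟩, _⟩ := hfire
        simp only [PTNet.restrict, Finset.mem_sdiff, hT, Finset.mem_union] at hmem
        rcases hmem.1 with h | h
        · exact hτ (by simpa using h)
        · exact hmem.2 h
  · -- (N | N') \ (H \ H') weakly simulated by N
    refine ⟨fun Mc M => ∀ p ∈ N.places, M p = Mc p, ?_, ?_⟩
    · intro p hp
      simp [PTNet.toLTS, PTNet.combine, hp]
    · intro Mc M hR
      set NC := (N.comp N').restrict (H \ N'.transitions) with hNC
      constructor
      · intro σ hσ Mc2 hfire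
        simp only [Finset.coe_sort_coe, Finset.mem_coe] at hσ
        obtain ⟨⟨hmem, hen⟩, heq⟩ := hfire
        have hσN : σ ∈ N.transitions := by rw [hT]; exact Finset.mem_union_left _ hσ
        have hσnH : σ ∉ H := Finset.disjoint_left.mp hLH hσ
        have hmemC : σ ∈ NC.transitions := hmem
        have hcond : σ ∈ (N.comp N').transitions \ (H \ N'.transitions) := by
          simp [PTNet.comp, hσN, hσnH]
        have hpreC : NC.pre σ = (N.comp N').pre σ := by
          rw [hNC, restrict_pre_of_mem _ _ hcond]
        have hpostC : NC.post σ = (N.comp N').post σ := by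
          rw [hNC, restrict_post_of_mem _ _ hcond]
        refine ⟨M, N.fire M σ, N.fire M σ,
          Relation.ReflTransGen.refl, ⟨⟨hσN, ?_⟩, rfl⟩,
          Relation.ReflTransGen.refl, ?_⟩
        · intro p hp
          have hpC : p ∈ NC.places := by
            simp [hNC, PTNet.restrict, PTNet.comp, hp]
          have := hen p hpC
          have hpre : NC.pre σ p = N.pre σ p := by
            rw [hpreC]; simp [PTNet.comp, hp]
          rw [hpre] at this
          rw [hR p hp]; exact this
        · intro p hp
          have hpC : p ∈ (N.comp N').places := by
            simp [PTNet.comp, hp]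
          have hpre : NC.pre σ p = N.pre σ p := by
            rw [hpreC]; simp [PTNet.comp, hp]
          have hpost : NC.post σ p = N.post σ p := by
            rw [hpostC]; simp [PTNet.comp, hp]
          have hplC : NC.places = (N.comp N').places := rfl
          rw [heq]
          simp only [PTNet.fire, hplC, hpC, if_pos, hpre, hpost, hp, if_pos]
          rw [hR p hp]
      · intro τ hτ Mc2 hfire
        simp only [Finset.coe_sort_coe, Finset.mem_coe] at hτ
        obtain ⟨⟨hmem, hen⟩, heq⟩ := hfire
        have hmemC : τ ∈ NC.transitions := hmem
        have hmem' : τ ∈ (N.comp N').transitions ∧ τ ∉ H \ N'.transitions := by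
          simpa [hNC, PTNet.restrict, Finset.mem_sdiff] using hmem
        have hcond : τ ∈ (N.comp N').transitions \ (H \ N'.transitions) :=
          Finset.mem_sdiff.mpr hmem'
        have hpreC : NC.pre τ = (N.comp N').pre τ := by
          rw [hNC, restrict_pre_of_mem _ _ hcond]
        have hpostC : NC.post τ = (N.comp N').post τ := by
          rw [hNC, restrict_post_of_mem _ _ hcond]
        by_cases hτN : τ ∈ N.transitions
        · -- τ ∈ H ∩ N'.transitions : one τ step in N
          have hτH : τ ∈ H := by
            rw [hT] at hτN
            rcases Finset.mem_union.mp hτN with h | h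
            · exact absurd h hτ
            · exact h
          refine ⟨N.fire M τ, Relation.ReflTransGen.single ⟨τ, ?_, ⟨⟨hτN, ?_⟩, rfl⟩⟩, ?_⟩
          · simpa using hτ
          · intro p hp
            have hpC : p ∈ NC.places := by
              simp [hNC, PTNet.restrict, PTNet.comp, hp]
            have := hen p hpC
            have hpre : NC.pre τ p = N.pre τ p := by
              rw [hpreC]; simp [PTNet.comp, hp]
            rw [hpre] at this
            rw [hR p hp]; exact this
          · intro p hp
            have hpC : p ∈ (N.comp N').places := by
              simp [PTNet.comp, hp]
            have hpre : NC.pre τ p = N.pre τ p := by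
              rw [hpreC]; simp [PTNet.comp, hp]
            have hpost : NC.post τ p = N.post τ p := by
              rw [hpostC]; simp [PTNet.comp, hp]
            have hplC : NC.places = (N.comp N').places := rfl
            rw [heq]
            simp only [PTNet.fire, hplC, hpC, if_pos, hpre, hpost, hp, if_pos]
            rw [hR p hp]
        · -- τ ∈ N'.transitions \ N.transitions : no effect on N.places
          refine ⟨M, Relation.ReflTransGen.refl, ?_⟩
          intro p hp
          have hpC : p ∈ (N.comp N').places := by
            simp [PTNet.comp, hp]
          have hpre : NC.pre τ p = 0 := by
            rw [hpreC]; simp [PTNet.comp, hp, N.pre_eq_zero τ hτN]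
          have hpost : NC.post τ p = 0 := by
            rw [hpostC]; simp [PTNet.comp, hp, N.post_eq_zero τ hτN]
          have hplC : NC.places = (N.comp N').places := rfl
          rw [heq]
          simp only [PTNet.fire, hplC, hpC, if_pos, hpre, hpost]
          rw [hR p hp]
          omega
end

section
/- Let N be a two-level PT-net system with transition set T = L ∪ H, and let N' be any high-level net system whose set of transitions H' does not intersect L and whose set of places is disjoint from that of N. Then the chain of language inclusions L(N\H) ⊆ L((N|N')\(H\H')) ⊆ L(N) holds, where in each system the observable transitions are exactly those in L. Moreover both bounds are attained: the lower bound when N' has no place and H' = ∅, and the upper bound when N' has no place and H' = H. -/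
section Aux

variable {P Tr : Type _} [DecidableEq P] [DecidableEq Tr]

lemma firesSeq_nil_iff (N : PTNet P Tr) (M M' : P → ℕ) :
    N.FiresSeq M [] M' ↔ M' = M := Iff.rfl

lemma firesSeq_cons_iff (N : PTNet P Tr) (M M' : P → ℕ) (t : Tr) (s : List Tr) :
    N.FiresSeq M (t :: s) M' ↔ ∃ M'', N.Fires M t M'' ∧ N.FiresSeq M'' s M' := Iff.rfl

lemma firesSeq_mem_transitions (A : PTNet P Tr) :
    ∀ {s : List Tr} {M M' : P → ℕ}, A.FiresSeq M s M' → ∀ t ∈ s, t ∈ A.transitions := by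
  intro s
  induction s with
  | nil => intro M M' _ t ht; simp at ht
  | cons a s ih =>
    intro M M' h t ht
    obtain ⟨M'', hf, hs⟩ := h
    rcases List.mem_cons.mp ht with rfl | ht
    · exact hf.1.1
    · exact ih hs t ht

/-- Simulation upward: from a "smaller" net `B` into a "bigger" net `A`. -/
lemma simUp (A B : PTNet P Tr)
    (hpl : B.places ⊆ A.places)
    (htr : ∀ t ∈ B.transitions, t ∈ A.transitions)
    (hpre : ∀ t ∈ B.transitions, ∀ p ∈ B.places, A.pre t p = B.pre t p)
    (hpost : ∀ t ∈ B.transitions, ∀ p ∈ B.places, A.post t p = B.post t p)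
    (hpre0 : ∀ t ∈ B.transitions, ∀ p ∈ A.places, p ∉ B.places → A.pre t p = 0) :
    ∀ {s : List Tr} {Mn M1n : P → ℕ}, B.FiresSeq Mn s M1n →
      ∀ Mc : P → ℕ, (∀ p ∈ B.places, Mc p = Mn p) →
      ∃ M1c, A.FiresSeq Mc s M1c ∧ (∀ p ∈ B.places, M1c p = M1n p) := by
  intro s
  induction s with
  | nil =>
    intro Mn M1n h Mc hagree
    exact ⟨Mc, rfl, fun p hp => by rw [hagree p hp, h]⟩
  | cons t s ih =>
    intro Mn M1n h Mc hagree
    obtain ⟨M'', ⟨⟨htB, hen⟩, hM''⟩, hrest⟩ := h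
    have htA := htr t htB
    have henA : A.Enabled Mc t := by
      refine ⟨htA, fun p hp => ?_⟩
      by_cases hpB : p ∈ B.places
      · rw [hpre t htB p hpB, hagree p hpB]; exact hen p hpB
      · rw [hpre0 t htB p hp hpB]; exact Nat.zero_le _
    have hagree' : ∀ p ∈ B.places, A.fire Mc t p = M'' p := by
      intro p hp
      have hpA : p ∈ A.places := hpl hp
      rw [hM'']
      simp only [PTNet.fire, if_pos hpA, if_pos hp,
        hpre t htB p hp, hpost t htB p hp, hagree p hp]
    obtain ⟨M1c, hseq, hfin⟩ := ih hrest (A.fire Mc t) hagree'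
    exact ⟨M1c, ⟨A.fire Mc t, ⟨henA, rfl⟩, hseq⟩, hfin⟩

/-- Simulation downward: from a "bigger" net `A` onto a "smaller" net `B`,
projecting the firing sequence onto the transitions of `B`. -/
lemma simDown (A B : PTNet P Tr)
    (hpl : B.places ⊆ A.places)
    (hpre : ∀ t ∈ A.transitions, t ∈ B.transitions → ∀ p ∈ B.places, A.pre t p = B.pre t p)
    (hpost : ∀ t ∈ A.transitions, t ∈ B.transitions → ∀ p ∈ B.places, A.post t p = B.post t p)
    (hpre0 : ∀ t ∈ A.transitions, t ∉ B.transitions → ∀ p ∈ B.places, A.pre t p = 0)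
    (hpost0 : ∀ t ∈ A.transitions, t ∉ B.transitions → ∀ p ∈ B.places, A.post t p = 0) :
    ∀ {s : List Tr} {Mc M1c : P → ℕ}, A.FiresSeq Mc s M1c →
      ∀ Mn : P → ℕ, (∀ p ∈ B.places, Mn p = Mc p) →
      ∃ M1n, B.FiresSeq Mn (s.filter (· ∈ B.transitions)) M1n ∧
        ∀ p ∈ B.places, M1n p = M1c p := by
  intro s
  induction s with
  | nil =>
    intro Mc M1c h Mn hagree
    exact ⟨Mn, rfl, fun p hp => by rw [hagree p hp, h]⟩
  | cons t s ih =>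
    intro Mc M1c h Mn hagree
    obtain ⟨M'', ⟨⟨htA, hen⟩, hM''⟩, hrest⟩ := h
    by_cases htB : t ∈ B.transitions
    · have henB : B.Enabled Mn t := by
        refine ⟨htB, fun p hp => ?_⟩
        rw [← hpre t htA htB p hp, hagree p hp]
        exact hen p (hpl hp)
      have hagree' : ∀ p ∈ B.places, B.fire Mn t p = M'' p := by
        intro p hp
        have hpA : p ∈ A.places := hpl hp
        rw [hM'']
        simp only [PTNet.fire, if_pos hpA, if_pos hp,
          hpre t htA htB p hp, hpost t htA htB p hp, hagree p hp]
      obtain ⟨M1n, hseq, hfin⟩ := ih hrest (B.fire Mn t) hagree'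
      refine ⟨M1n, ?_, hfin⟩
      have hf : (t :: s).filter (· ∈ B.transitions) =
          t :: s.filter (· ∈ B.transitions) := by simp [htB]
      rw [hf]
      exact ⟨B.fire Mn t, ⟨henB, rfl⟩, hseq⟩
    · have hagree' : ∀ p ∈ B.places, Mn p = M'' p := by
        intro p hp
        have hpA : p ∈ A.places := hpl hp
        rw [hM'']
        simp only [PTNet.fire, if_pos hpA,
          hpre0 t htA htB p hp, hpost0 t htA htB p hp, hagree p hp,
          Nat.add_zero, Nat.sub_zero]
      obtain ⟨M1n, hseq, hfin⟩ := ih hrest Mn hagree'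
      refine ⟨M1n, ?_, hfin⟩
      have hf : (t :: s).filter (· ∈ B.transitions) =
          s.filter (· ∈ B.transitions) := by simp [htB]
      rw [hf]
      exact hseq

lemma filter_filter_of (L' T' : Finset Tr) (h : ∀ t ∈ L', t ∈ T') :
    ∀ s : List Tr, (s.filter (· ∈ T')).filter (· ∈ L') = s.filter (· ∈ L') := by
  intro s
  induction s with
  | nil => rfl
  | cons a s ih =>
    by_cases h1 : a ∈ T'
    · by_cases h2 : a ∈ L' <;> simp [h1, h2, ih]
    · have h2 : a ∉ L' := fun h2 => h1 (h a h2)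
      simp [h1, h2, ih]

end Aux

/-- the chain of language inclusions
`L(N\H) ⊆ L((N|N')\(H\H')) ⊆ L(N)` holds, and both bounds are attained:
the lower bound by the placeless net with `H' = ∅`, the upper bound by the
placeless net with `H' = H`. -/
theorem lang_chain_and_bounds
    {P Tr : Type _} [DecidableEq P] [DecidableEq Tr]
    (N : PTNet P Tr) (M0 : P → ℕ) (L H : Finset Tr)
    (hT : N.transitions = L ∪ H) (hLH : Disjoint L H) :
    (∀ (N' : PTNet P Tr) (M0' : P → ℕ),
        Disjoint N.places N'.places → Disjoint N'.transitions L →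
        (N.restrict H).lang M0 L ⊆
            ((N.comp N').restrict (H \ N'.transitions)).lang (N.combine M0 M0') L ∧
        ((N.comp N').restrict (H \ N'.transitions)).lang (N.combine M0 M0') L ⊆
            N.lang M0 L) ∧
    (∀ M0' : P → ℕ,
        ((N.comp (PTNet.ofSets (∅ : Finset P) (∅ : Finset Tr))).restrict
            (H \ (PTNet.ofSets (∅ : Finset P) (∅ : Finset Tr)).transitions)).lang
          (N.combine M0 M0') L = (N.restrict H).lang M0 L) ∧
    (∀ M0' : P → ℕ,
        ((N.comp (PTNet.ofSets (∅ : Finset P) H)).restrict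
            (H \ (PTNet.ofSets (∅ : Finset P) H).transitions)).lang
          (N.combine M0 M0') L = N.lang M0 L) := by
  have hLsub : ∀ t ∈ L, t ∈ N.transitions := by
    intro t ht; rw [hT]; exact Finset.mem_union_left _ ht
  have hHsub : ∀ t ∈ H, t ∈ N.transitions := by
    intro t ht; rw [hT]; exact Finset.mem_union_right _ ht
  -- the lower inclusion of the chain
  have chainLow : ∀ (N' : PTNet P Tr) (M0' : P → ℕ), Disjoint N'.transitions L →
      (N.restrict H).lang M0 L ⊆
        ((N.comp N').restrict (H \ N'.transitions)).lang (N.combine M0 M0') L := by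
    intro N' M0' hdisT w hw
    obtain ⟨s, M, hfs, hfil⟩ := hw
    set A := (N.comp N').restrict (H \ N'.transitions) with hA
    have htrA : ∀ t ∈ (N.restrict H).transitions, t ∈ A.transitions := by
      intro t ht
      have ht' : t ∈ N.transitions ∧ t ∉ H := Finset.mem_sdiff.mp ht
      show t ∈ (N.transitions ∪ N'.transitions) \ (H \ N'.transitions)
      refine Finset.mem_sdiff.mpr ⟨Finset.mem_union_left _ ht'.1, fun hc => ?_⟩
      exact ht'.2 (Finset.mem_sdiff.mp hc).1
    obtain ⟨M1c, hseq, _⟩ :=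
      simUp A (N.restrict H)
        (by intro p hp; exact Finset.mem_union_left _ hp)
        htrA
        (by
          intro t ht p hp
          have htA := htrA t ht
          show (if t ∈ (N.comp N').transitions \ (H \ N'.transitions) then
              (N.comp N').pre t p else 0) = _
          rw [if_pos (show t ∈ (N.comp N').transitions \ (H \ N'.transitions) from htA)]
          show (if p ∈ N.places then N.pre t p else N'.pre t p) = _
          rw [if_pos (show p ∈ N.places from hp)]
          show _ = (if t ∈ N.transitions \ H then N.pre t p else 0)
          rw [if_pos (show t ∈ N.transitions \ H from ht)])
        (by
          intro t ht p hp
          have htA := htrA t ht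
          show (if t ∈ (N.comp N').transitions \ (H \ N'.transitions) then
              (N.comp N').post t p else 0) = _
          rw [if_pos (show t ∈ (N.comp N').transitions \ (H \ N'.transitions) from htA)]
          show (if p ∈ N.places then N.post t p else N'.post t p) = _
          rw [if_pos (show p ∈ N.places from hp)]
          show _ = (if t ∈ N.transitions \ H then N.post t p else 0)
          rw [if_pos (show t ∈ N.transitions \ H from ht)])
        (by
          intro t ht p _ hpB
          have htA := htrA t ht
          have ht' : t ∈ N.transitions ∧ t ∉ H := Finset.mem_sdiff.mp ht
          have htL : t ∈ L := by
            have := ht'.1; rw [hT] at this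
            rcases Finset.mem_union.mp this with h | h
            · exact h
            · exact absurd h ht'.2
          have htN' : t ∉ N'.transitions := fun hc =>
            (Finset.disjoint_left.mp hdisT hc) htL
          show (if t ∈ (N.comp N').transitions \ (H \ N'.transitions) then
              (N.comp N').pre t p else 0) = 0
          rw [if_pos (show t ∈ (N.comp N').transitions \ (H \ N'.transitions) from htA)]
          show (if p ∈ N.places then N.pre t p else N'.pre t p) = 0
          rw [if_neg (show ¬ p ∈ N.places from hpB)]
          exact N'.pre_eq_zero t htN' p)
        hfs (N.combine M0 M0')
        (by intro p hp; show (if p ∈ N.places then M0 p else M0' p) = M0 p;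
            exact if_pos hp)
    exact ⟨s, M1c, hseq, hfil⟩
  -- the upper inclusion of the chain
  have chainHigh : ∀ (N' : PTNet P Tr) (M0' : P → ℕ), Disjoint N'.transitions L →
      ((N.comp N').restrict (H \ N'.transitions)).lang (N.combine M0 M0') L ⊆
        N.lang M0 L := by
    intro N' M0' hdisT w hw
    obtain ⟨s, M, hfs, hfil⟩ := hw
    set A := (N.comp N').restrict (H \ N'.transitions) with hA
    have hApre : ∀ t ∈ A.transitions, ∀ p ∈ N.places, A.pre t p = N.pre t p := by
      intro t ht p hp
      show (if t ∈ (N.comp N').transitions \ (H \ N'.transitions) then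
          (N.comp N').pre t p else 0) = _
      rw [if_pos (show t ∈ (N.comp N').transitions \ (H \ N'.transitions) from ht)]
      show (if p ∈ N.places then N.pre t p else N'.pre t p) = _
      rw [if_pos (show p ∈ N.places from hp)]
    have hApost : ∀ t ∈ A.transitions, ∀ p ∈ N.places, A.post t p = N.post t p := by
      intro t ht p hp
      show (if t ∈ (N.comp N').transitions \ (H \ N'.transitions) then
          (N.comp N').post t p else 0) = _
      rw [if_pos (show t ∈ (N.comp N').transitions \ (H \ N'.transitions) from ht)]
      show (if p ∈ N.places then N.post t p else N'.post t p) = _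
      rw [if_pos (show p ∈ N.places from hp)]
    obtain ⟨M1n, hseq, _⟩ :=
      simDown A N
        (by intro p hp; exact Finset.mem_union_left _ hp)
        (fun t ht _ p hp => hApre t ht p hp)
        (fun t ht _ p hp => hApost t ht p hp)
        (fun t ht htN p hp => by rw [hApre t ht p hp]; exact N.pre_eq_zero t htN p)
        (fun t ht htN p hp => by rw [hApost t ht p hp]; exact N.post_eq_zero t htN p)
        hfs M0
        (by intro p hp; symm;
            show (if p ∈ N.places then M0 p else M0' p) = M0 p; exact if_pos hp)
    refine ⟨s.filter (· ∈ N.transitions), M1n, hseq, ?_⟩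
    rw [filter_filter_of L N.transitions hLsub s, hfil]
  refine ⟨fun N' M0' _ hdisT => ⟨chainLow N' M0' hdisT, chainHigh N' M0' hdisT⟩, ?_, ?_⟩
  · -- lower bound attained: N' placeless with H' = ∅
    intro M0'
    set N0 := PTNet.ofSets (∅ : Finset P) (∅ : Finset Tr) with hN0
    apply Set.Subset.antisymm
    · -- ⊆ : project back to N \ H
      intro w hw
      obtain ⟨s, M, hfs, hfil⟩ := hw
      set A := (N.comp N0).restrict (H \ N0.transitions) with hA
      have htreq : A.transitions = (N.restrict H).transitions := by
        show (N.transitions ∪ N0.transitions) \ (H \ N0.transitions)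
            = N.transitions \ H
        show (N.transitions ∪ ∅) \ (H \ ∅) = N.transitions \ H
        simp
      have hApre : ∀ t ∈ A.transitions, ∀ p ∈ N.places,
          A.pre t p = (N.restrict H).pre t p := by
        intro t ht p hp
        show (if t ∈ (N.comp N0).transitions \ (H \ N0.transitions) then
            (N.comp N0).pre t p else 0) = _
        rw [if_pos (show t ∈ (N.comp N0).transitions \ (H \ N0.transitions) from ht)]
        show (if p ∈ N.places then N.pre t p else N0.pre t p) = _
        rw [if_pos (show p ∈ N.places from hp)]
        show _ = (if t ∈ N.transitions \ H then N.pre t p else 0)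
        have ht' : t ∈ (N.restrict H).transitions := htreq ▸ ht
        rw [if_pos (show t ∈ N.transitions \ H from ht')]
      have hApost : ∀ t ∈ A.transitions, ∀ p ∈ N.places,
          A.post t p = (N.restrict H).post t p := by
        intro t ht p hp
        show (if t ∈ (N.comp N0).transitions \ (H \ N0.transitions) then
            (N.comp N0).post t p else 0) = _
        rw [if_pos (show t ∈ (N.comp N0).transitions \ (H \ N0.transitions) from ht)]
        show (if p ∈ N.places then N.post t p else N0.post t p) = _
        rw [if_pos (show p ∈ N.places from hp)]
        show _ = (if t ∈ N.transitions \ H then N.post t p else 0)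
        have ht' : t ∈ (N.restrict H).transitions := htreq ▸ ht
        rw [if_pos (show t ∈ N.transitions \ H from ht')]
      obtain ⟨M1n, hseq, _⟩ :=
        simDown A (N.restrict H)
          (by intro p hp; exact Finset.mem_union_left _ hp)
          (fun t ht _ p hp => hApre t ht p hp)
          (fun t ht _ p hp => hApost t ht p hp)
          (fun t ht htB _ _ => absurd (htreq ▸ ht) htB)
          (fun t ht htB _ _ => absurd (htreq ▸ ht) htB)
          hfs M0
          (by intro p hp; symm;
              show (if p ∈ N.places then M0 p else M0' p) = M0 p; exact if_pos hp)
      have hall : ∀ t ∈ s, t ∈ (N.restrict H).transitions := fun t ht =>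
        htreq ▸ firesSeq_mem_transitions A hfs t ht
      have hfeq : s.filter (· ∈ (N.restrict H).transitions) = s :=
        List.filter_eq_self.mpr (fun t ht => by simpa using hall t ht)
      rw [hfeq] at hseq
      exact ⟨s, M1n, hseq, hfil⟩
    · exact chainLow N0 M0' (by
        show Disjoint (∅ : Finset Tr) L
        exact Finset.disjoint_left.mpr (fun _ h => absurd h (Finset.notMem_empty _)))
  · -- upper bound attained: N' placeless with H' = H
    intro M0'
    set NH := PTNet.ofSets (∅ : Finset P) H with hNH
    apply Set.Subset.antisymm
    · exact chainHigh NH M0' hLH.symm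
    · -- N.lang ⊆ lang of composition
      intro w hw
      obtain ⟨s, M, hfs, hfil⟩ := hw
      set A := (N.comp NH).restrict (H \ NH.transitions) with hA
      have htreq : A.transitions = N.transitions := by
        show (N.transitions ∪ NH.transitions) \ (H \ NH.transitions) = N.transitions
        show (N.transitions ∪ H) \ (H \ H) = N.transitions
        rw [Finset.sdiff_self, Finset.sdiff_empty,
          Finset.union_eq_left.mpr (fun t ht => hHsub t ht)]
      obtain ⟨M1c, hseq, _⟩ :=
        simUp A N
          (by intro p hp; exact Finset.mem_union_left _ hp)
          (fun t ht => htreq.symm ▸ ht)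
          (by
            intro t ht p hp
            show (if t ∈ (N.comp NH).transitions \ (H \ NH.transitions) then
                (N.comp NH).pre t p else 0) = _
            have ht' : t ∈ A.transitions := htreq.symm ▸ ht
            rw [if_pos (show t ∈ (N.comp NH).transitions \ (H \ NH.transitions) from ht')]
            show (if p ∈ N.places then N.pre t p else NH.pre t p) = _
            rw [if_pos (show p ∈ N.places from hp)])
          (by
            intro t ht p hp
            show (if t ∈ (N.comp NH).transitions \ (H \ NH.transitions) then
                (N.comp NH).post t p else 0) = _
            have ht' : t ∈ A.transitions := htreq.symm ▸ ht
            rw [if_pos (show t ∈ (N.comp NH).transitions \ (H \ NH.transitions) from ht')]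
            show (if p ∈ N.places then N.post t p else NH.post t p) = _
            rw [if_pos (show p ∈ N.places from hp)])
          (by
            intro t _ p hpA hpN
            exfalso
            have : p ∈ N.places ∪ NH.places := hpA
            rw [show NH.places = (∅ : Finset P) from rfl, Finset.union_empty] at this
            exact hpN this)
          hfs (N.combine M0 M0')
          (by intro p hp; show (if p ∈ N.places then M0 p else M0' p) = M0 p;
              exact if_pos hp)
      exact ⟨s, M1c, hseq, hfil⟩
end

section
/- A two-level PT-net system N with transition set T = L ∪ H has the property NDC if and only if N and N\H are language equivalent, i.e., L(N) = L(N\H). -/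
section Aux

variable {P Tr : Type _} [DecidableEq P] [DecidableEq Tr]

/-- Congruence for firing w.r.t. nets that agree on places, transitions and flows. -/
theorem PTNet.fires_congr {N1 N2 : PTNet P Tr}
    (hp : N1.places = N2.places) (ht : N1.transitions = N2.transitions)
    (hpre : ∀ t ∈ N1.transitions, ∀ p ∈ N1.places, N1.pre t p = N2.pre t p)
    (hpost : ∀ t ∈ N1.transitions, ∀ p ∈ N1.places, N1.post t p = N2.post t p)
    (M : P → ℕ) (t : Tr) (M' : P → ℕ) : N1.Fires M t M' ↔ N2.Fires M t M' := by
  have hen : N1.Enabled M t ↔ N2.Enabled M t := by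
    constructor
    · rintro ⟨htr, h⟩
      exact ⟨ht ▸ htr, fun p hpm => (hpre t htr p (hp ▸ hpm)) ▸ h p (hp ▸ hpm)⟩
    · rintro ⟨htr, h⟩
      exact ⟨ht.symm ▸ htr, fun p hpm => (hpre t (ht.symm ▸ htr) p hpm) ▸ h p (hp ▸ hpm)⟩
  have hf : N1.Enabled M t → N1.fire M t = N2.fire M t := by
    rintro ⟨htr, -⟩
    funext p
    unfold PTNet.fire
    rw [← hp]
    by_cases hpm : p ∈ N1.places
    · simp [hpm, hpre t htr p hpm, hpost t htr p hpm]
    · simp [hpm]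
  constructor
  · rintro ⟨he, rfl⟩
    exact ⟨hen.mp he, (hf he).symm ▸ rfl⟩
  · rintro ⟨he, rfl⟩
    exact ⟨hen.mpr he, (hf (hen.mpr he)).symm⟩

theorem PTNet.firesSeq_congr {N1 N2 : PTNet P Tr}
    (hp : N1.places = N2.places) (ht : N1.transitions = N2.transitions)
    (hpre : ∀ t ∈ N1.transitions, ∀ p ∈ N1.places, N1.pre t p = N2.pre t p)
    (hpost : ∀ t ∈ N1.transitions, ∀ p ∈ N1.places, N1.post t p = N2.post t p)
    (s : List Tr) : ∀ M M', N1.FiresSeq M s M' ↔ N2.FiresSeq M s M' := by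
  induction s with
  | nil => intro M M'; rfl
  | cons t s ih =>
    intro M M'
    constructor
    · rintro ⟨M'', hf, hs⟩
      exact ⟨M'', (PTNet.fires_congr hp ht hpre hpost M t M'').mp hf, (ih M'' M').mp hs⟩
    · rintro ⟨M'', hf, hs⟩
      exact ⟨M'', (PTNet.fires_congr hp ht hpre hpost M t M'').mpr hf, (ih M'' M').mpr hs⟩

theorem PTNet.lang_congr {N1 N2 : PTNet P Tr}
    (hp : N1.places = N2.places) (ht : N1.transitions = N2.transitions)
    (hpre : ∀ t ∈ N1.transitions, ∀ p ∈ N1.places, N1.pre t p = N2.pre t p)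
    (hpost : ∀ t ∈ N1.transitions, ∀ p ∈ N1.places, N1.post t p = N2.post t p)
    (M0 : P → ℕ) (L : Finset Tr) : N1.lang M0 L = N2.lang M0 L := by
  ext w
  constructor <;> rintro ⟨s, M, hs, hw⟩
  · exact ⟨s, M, (PTNet.firesSeq_congr hp ht hpre hpost s M0 M).mp hs, hw⟩
  · exact ⟨s, M, (PTNet.firesSeq_congr hp ht hpre hpost s M0 M).mpr hs, hw⟩

end Aux

section Flow

variable {P Tr : Type _} [DecidableEq P] [DecidableEq Tr]

theorem PTNet.restrict_pre (N : PTNet P Tr) (T' : Finset Tr) (t : Tr)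
    (ht : t ∈ N.transitions \ T') (p : P) :
    (N.restrict T').pre t p = N.pre t p := if_pos ht

theorem PTNet.restrict_post (N : PTNet P Tr) (T' : Finset Tr) (t : Tr)
    (ht : t ∈ N.transitions \ T') (p : P) :
    (N.restrict T').post t p = N.post t p := if_pos ht

theorem PTNet.comp_pre_left (N1 N2 : PTNet P Tr) (t : Tr) {p : P} (hp : p ∈ N1.places) :
    (N1.comp N2).pre t p = N1.pre t p := if_pos hp

theorem PTNet.comp_pre_right (N1 N2 : PTNet P Tr) (t : Tr) {p : P} (hp : p ∉ N1.places) :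
    (N1.comp N2).pre t p = N2.pre t p := if_neg hp

theorem PTNet.comp_post_left (N1 N2 : PTNet P Tr) (t : Tr) {p : P} (hp : p ∈ N1.places) :
    (N1.comp N2).post t p = N1.post t p := if_pos hp

theorem PTNet.comp_post_right (N1 N2 : PTNet P Tr) (t : Tr) {p : P} (hp : p ∉ N1.places) :
    (N1.comp N2).post t p = N2.post t p := if_neg hp

end Flow

section Main

variable {P Tr : Type _} [DecidableEq P] [DecidableEq Tr]
variable {N : PTNet P Tr} {M0 : P → ℕ} {L H : Finset Tr}

/-- In the composed restricted net, firing sequences of `N \ H` can be replayed. -/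
theorem sim_restrict_to_comp
    (hT : N.transitions = L ∪ H) (hLH : Disjoint L H)
    (N' : PTNet P Tr) (hd2 : Disjoint N'.transitions L) :
    ∀ (s : List Tr) (M M' : P → ℕ), (N.restrict H).FiresSeq M s M' →
      ∀ Mc : P → ℕ, (∀ p ∈ N.places, Mc p = M p) →
      ∃ Mc', ((N.comp N').restrict (H \ N'.transitions)).FiresSeq Mc s Mc' ∧
        ∀ p ∈ N.places, Mc' p = M' p := by
  set C := (N.comp N').restrict (H \ N'.transitions) with hC
  intro s
  induction s with
  | nil =>
    rintro M M' rfl Mc hag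
    exact ⟨Mc, rfl, hag⟩
  | cons t s ih =>
    rintro M M' ⟨M'', ⟨⟨htr, hpre⟩, rfl⟩, hs⟩ Mc hag
    have htN : t ∈ N.transitions := (Finset.mem_sdiff.mp htr).1
    have htH : t ∉ H := (Finset.mem_sdiff.mp htr).2
    have htL : t ∈ L := by
      rcases Finset.mem_union.mp (hT ▸ htN) with h | h
      · exact h
      · exact absurd h htH
    have htN' : t ∉ N'.transitions := fun h => Finset.disjoint_left.mp hd2 h htL
    have htCs : t ∈ (N.comp N').transitions \ (H \ N'.transitions) :=
      Finset.mem_sdiff.mpr ⟨Finset.mem_union_left _ htN,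
        fun h => htH (Finset.mem_sdiff.mp h).1⟩
    have htC : t ∈ C.transitions := htCs
    have hCpre : ∀ p, p ∈ N.places → C.pre t p = N.pre t p := by
      intro p hp
      rw [hC, PTNet.restrict_pre _ _ t htCs p, PTNet.comp_pre_left _ _ t hp]
    have hCpost : ∀ p, p ∈ N.places → C.post t p = N.post t p := by
      intro p hp
      rw [hC, PTNet.restrict_post _ _ t htCs p, PTNet.comp_post_left _ _ t hp]
    have hCpre0 : ∀ p, p ∉ N.places → C.pre t p = 0 := by
      intro p hp
      rw [hC, PTNet.restrict_pre _ _ t htCs p, PTNet.comp_pre_right _ _ t hp,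
        N'.pre_eq_zero t htN' p]
    have hen : C.Enabled Mc t := by
      refine ⟨htC, fun p hp => ?_⟩
      by_cases hpN : p ∈ N.places
      · rw [hCpre p hpN, hag p hpN]
        have h1 := hpre p hpN
        rwa [N.restrict_pre H t htr p] at h1
      · rw [hCpre0 p hpN]; exact Nat.zero_le _
    have hfire : C.Fires Mc t (C.fire Mc t) := ⟨hen, rfl⟩
    have hag' : ∀ p ∈ N.places, C.fire Mc t p = (N.restrict H).fire M t p := by
      intro p hp
      have hpC : p ∈ C.places := Finset.mem_union_left _ hp
      have hpR : p ∈ (N.restrict H).places := hp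
      show (if p ∈ C.places then Mc p + C.post t p - C.pre t p else Mc p) =
        if p ∈ (N.restrict H).places then
          M p + (N.restrict H).post t p - (N.restrict H).pre t p else M p
      rw [if_pos hpC, if_pos hpR, hCpre p hp, hCpost p hp, hag p hp,
        N.restrict_pre H t htr p, N.restrict_post H t htr p]
    obtain ⟨Mc', hseq, hag''⟩ := ih ((N.restrict H).fire M t) M' hs (C.fire Mc t) hag'
    exact ⟨Mc', ⟨C.fire Mc t, hfire, hseq⟩, hag''⟩

/-- Firing sequences of the composed restricted net project to firing sequences of `N`. -/
theorem sim_comp_to_base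
    (N' : PTNet P Tr) :
    ∀ (s : List Tr) (Mc Mc' : P → ℕ),
      ((N.comp N').restrict (H \ N'.transitions)).FiresSeq Mc s Mc' →
      ∀ M : P → ℕ, (∀ p ∈ N.places, M p = Mc p) →
      ∃ M', N.FiresSeq M (s.filter (· ∈ N.transitions)) M' := by
  set C := (N.comp N').restrict (H \ N'.transitions) with hC
  intro s
  induction s with
  | nil =>
    rintro Mc Mc' rfl M hag
    exact ⟨M, rfl⟩
  | cons t s ih =>
    rintro Mc Mc' ⟨Mc'', ⟨⟨htC, hpre⟩, rfl⟩, hs⟩ M hag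
    have htCs : t ∈ (N.comp N').transitions \ (H \ N'.transitions) := htC
    by_cases htN : t ∈ N.transitions
    · -- t fires in N as well
      have hCpre : ∀ p, p ∈ N.places → C.pre t p = N.pre t p := by
        intro p hp
        rw [hC, PTNet.restrict_pre _ _ t htCs p, PTNet.comp_pre_left _ _ t hp]
      have hCpost : ∀ p, p ∈ N.places → C.post t p = N.post t p := by
        intro p hp
        rw [hC, PTNet.restrict_post _ _ t htCs p, PTNet.comp_post_left _ _ t hp]
      have hen : N.Enabled M t := by
        refine ⟨htN, fun p hp => ?_⟩
        have hpC : p ∈ C.places := Finset.mem_union_left _ hp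
        rw [hag p hp, ← hCpre p hp]
        exact hpre p hpC
      have hag' : ∀ p ∈ N.places, N.fire M t p = C.fire Mc t p := by
        intro p hp
        have hpC : p ∈ C.places := Finset.mem_union_left _ hp
        show (if p ∈ N.places then M p + N.post t p - N.pre t p else M p) =
          if p ∈ C.places then Mc p + C.post t p - C.pre t p else Mc p
        rw [if_pos hp, if_pos hpC, hCpre p hp, hCpost p hp, hag p hp]
      obtain ⟨M', hseq⟩ := ih (C.fire Mc t) Mc' hs (N.fire M t) hag'
      refine ⟨M', ?_⟩
      rw [List.filter_cons_of_pos (by simpa using htN)]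
      exact ⟨N.fire M t, ⟨hen, rfl⟩, hseq⟩
    · -- t does not touch the places of N
      have hag' : ∀ p ∈ N.places, M p = C.fire Mc t p := by
        intro p hp
        have hpC : p ∈ C.places := Finset.mem_union_left _ hp
        have hprez : C.pre t p = 0 := by
          rw [hC, PTNet.restrict_pre _ _ t htCs p, PTNet.comp_pre_left _ _ t hp,
            N.pre_eq_zero t htN p]
        have hpostz : C.post t p = 0 := by
          rw [hC, PTNet.restrict_post _ _ t htCs p, PTNet.comp_post_left _ _ t hp,
            N.post_eq_zero t htN p]
        show M p = if p ∈ C.places then Mc p + C.post t p - C.pre t p else Mc p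
        rw [if_pos hpC, hprez, hpostz, hag p hp]
        omega
      obtain ⟨M', hseq⟩ := ih (C.fire Mc t) Mc' hs M hag'
      refine ⟨M', ?_⟩
      rw [List.filter_cons_of_neg (by simpa using htN)]
      exact hseq

theorem filter_trans_filter_L (hT : N.transitions = L ∪ H) (s : List Tr) :
    (s.filter (· ∈ N.transitions)).filter (· ∈ L) = s.filter (· ∈ L) := by
  rw [List.filter_filter]
  apply List.filter_congr
  intro a _
  by_cases hL : a ∈ L
  · have : a ∈ N.transitions := hT ▸ Finset.mem_union_left H hL
    simp [hL, this]
  · simp [hL]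

end Main

/-- a two-level net system has NDC iff `N` and `N \ H` are
language equivalent. -/
theorem ndc_iff_lang_eq
    {P Tr : Type _} [DecidableEq P] [DecidableEq Tr]
    (N : PTNet P Tr) (M0 : P → ℕ) (L H : Finset Tr)
    (hT : N.transitions = L ∪ H) (hLH : Disjoint L H) :
    NDC N M0 L H ↔ N.lang M0 L = (N.restrict H).lang M0 L := by
  constructor
  · -- NDC → language equivalence: instantiate with the flowless high net on no places
    intro hndc
    have hd1 : Disjoint N.places (PTNet.ofSets (∅ : Finset P) H).places := by
      simp [PTNet.ofSets]
    have hd2 : Disjoint (PTNet.ofSets (∅ : Finset P) H).transitions L := by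
      simpa [PTNet.ofSets] using hLH.symm
    have heq := hndc (PTNet.ofSets (∅ : Finset P) H) M0 hd1 hd2
    have hcomb : N.combine M0 M0 = M0 := by
      funext p; simp [PTNet.combine]
    have hHsub : H ⊆ N.transitions := hT ▸ Finset.subset_union_right
    have hlang :
        ((N.comp (PTNet.ofSets (∅ : Finset P) H)).restrict
          (H \ (PTNet.ofSets (∅ : Finset P) H).transitions)).lang M0 L = N.lang M0 L := by
      apply PTNet.lang_congr
      · simp [PTNet.restrict, PTNet.comp, PTNet.ofSets]
      · simp [PTNet.restrict, PTNet.comp, PTNet.ofSets,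
          Finset.union_eq_left.mpr hHsub]
      · intro t ht p hp
        have hts : t ∈ (N.comp (PTNet.ofSets (∅ : Finset P) H)).transitions \
            (H \ (PTNet.ofSets (∅ : Finset P) H).transitions) :=
          Finset.mem_sdiff.mpr ⟨(Finset.mem_sdiff.mp ht).1, by simp [PTNet.ofSets]⟩
        have hpN : p ∈ N.places := by
          rcases Finset.mem_union.mp hp with h | h
          · exact h
          · exact absurd h (Finset.notMem_empty p)
        rw [PTNet.restrict_pre (N.comp (PTNet.ofSets (∅ : Finset P) H)) _ t hts p,
          PTNet.comp_pre_left _ _ t hpN]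
      · intro t ht p hp
        have hts : t ∈ (N.comp (PTNet.ofSets (∅ : Finset P) H)).transitions \
            (H \ (PTNet.ofSets (∅ : Finset P) H).transitions) :=
          Finset.mem_sdiff.mpr ⟨(Finset.mem_sdiff.mp ht).1, by simp [PTNet.ofSets]⟩
        have hpN : p ∈ N.places := by
          rcases Finset.mem_union.mp hp with h | h
          · exact h
          · exact absurd h (Finset.notMem_empty p)
        rw [PTNet.restrict_post (N.comp (PTNet.ofSets (∅ : Finset P) H)) _ t hts p,
          PTNet.comp_post_left _ _ t hpN]
    calc N.lang M0 L
        = ((N.comp (PTNet.ofSets (∅ : Finset P) H)).restrict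
            (H \ (PTNet.ofSets (∅ : Finset P) H).transitions)).lang
            (N.combine M0 M0) L := by rw [hcomb, hlang]
      _ = (N.restrict H).lang M0 L := (heq).symm
  · -- language equivalence → NDC
    intro hEq N' M0' hd1 hd2
    apply Set.eq_of_subset_of_subset
    · rintro w ⟨s, M, hs, hw⟩
      have hag : ∀ p ∈ N.places, N.combine M0 M0' p = M0 p := by
        intro p hp; simp [PTNet.combine, hp]
      obtain ⟨Mc', hseq, -⟩ :=
        sim_restrict_to_comp hT hLH N' hd2 s M0 M hs (N.combine M0 M0') hag
      exact ⟨s, Mc', hseq, hw⟩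
    · rintro w ⟨s, Mc, hs, hw⟩
      have hag : ∀ p ∈ N.places, M0 p = N.combine M0 M0' p := by
        intro p hp; simp [PTNet.combine, hp]
      obtain ⟨M', hseq⟩ := sim_comp_to_base N' s (N.combine M0 M0') Mc hs M0 hag
      have hwN : (s.filter (· ∈ N.transitions)).filter (· ∈ L) = w := by
        rw [filter_trans_filter_L hT]; exact hw
      have : w ∈ N.lang M0 L := ⟨s.filter (· ∈ N.transitions), M', hseq, hwN⟩
      rw [← hEq]
      exact this
end

section
/- If a two-level PT-net system N with transition set T = L ∪ H has the property BNDC, then N and N\H are weakly bisimilar. -/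
/-- Weak bisimilarity is symmetric. -/
lemma WeaklyBisimilar.symm' {Q Q' A : Type _} {Obs : Set A} {S : LTS Q A} {S' : LTS Q' A}
    (h : WeaklyBisimilar Obs S S') : WeaklyBisimilar Obs S' S := by
  obtain ⟨R, h1, h2⟩ := h
  exact ⟨fun q' q => R q q', h2, h1⟩

/-- if a two-level net system has BNDC, then `N` and `N \ H` are
weakly bisimilar. -/
theorem weaklyBisimilar_of_bndc
    {P Tr : Type _} [DecidableEq P] [DecidableEq Tr]
    (N : PTNet P Tr) (M0 : P → ℕ) (L H : Finset Tr)
    (hT : N.transitions = L ∪ H) (hLH : Disjoint L H)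
    (hBNDC : BNDC N M0 L H) :
    WeaklyBisimilar (L : Set Tr) (N.toLTS M0) ((N.restrict H).toLTS M0) := by
  classical
  set N' : PTNet P Tr := PTNet.ofSets ∅ H with hN'
  have hH : H ⊆ N.transitions := by rw [hT]; exact Finset.subset_union_right
  have hdisj1 : Disjoint N.places N'.places := by
    simp [hN', PTNet.ofSets]
  have hdisj2 : Disjoint N'.transitions L := by
    simpa [hN', PTNet.ofSets] using hLH.symm
  have hb := hBNDC N' M0 hdisj1 hdisj2
  have hcomb : N.combine M0 M0 = M0 := by
    funext p; simp [PTNet.combine]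
  set Nc := (N.comp N').restrict (H \ N'.transitions) with hNc
  have htrans : Nc.transitions = N.transitions := by
    simp [hNc, hN', PTNet.restrict, PTNet.comp, PTNet.ofSets,
      Finset.union_eq_left.2 hH]
  have hplaces : Nc.places = N.places := by
    simp [hNc, hN', PTNet.restrict, PTNet.comp, PTNet.ofSets]
  have hpre : ∀ t ∈ N.transitions, ∀ p ∈ N.places, Nc.pre t p = N.pre t p := by
    intro t ht p hp
    simp [hNc, hN', PTNet.restrict, PTNet.comp, PTNet.ofSets, ht, hp]
  have hpost : ∀ t ∈ N.transitions, ∀ p ∈ N.places, Nc.post t p = N.post t p := by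
    intro t ht p hp
    simp [hNc, hN', PTNet.restrict, PTNet.comp, PTNet.ofSets, ht, hp]
  have hEn : ∀ M t, Nc.Enabled M t ↔ N.Enabled M t := by
    intro M t
    unfold PTNet.Enabled
    rw [htrans, hplaces]
    constructor
    · rintro ⟨ht, h2⟩
      exact ⟨ht, fun p hp => by rw [← hpre t ht p hp]; exact h2 p hp⟩
    · rintro ⟨ht, h2⟩
      exact ⟨ht, fun p hp => by rw [hpre t ht p hp]; exact h2 p hp⟩
  have hfire : ∀ M t, t ∈ N.transitions → Nc.fire M t = N.fire M t := by
    intro M t ht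
    funext p
    unfold PTNet.fire
    rw [hplaces]
    by_cases hp : p ∈ N.places
    · simp [hp, hpre t ht p hp, hpost t ht p hp]
    · simp [hp]
  have htr : ∀ M t M', Nc.Fires M t M' ↔ N.Fires M t M' := by
    intro M t M'
    unfold PTNet.Fires
    constructor
    · rintro ⟨hen, rfl⟩
      exact ⟨(hEn M t).1 hen, (hfire M t ((hEn M t).1 hen).1)⟩
    · rintro ⟨hen, rfl⟩
      exact ⟨(hEn M t).2 hen, (hfire M t hen.1).symm⟩
  have hLTS : Nc.toLTS (N.combine M0 M0) = N.toLTS M0 := by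
    unfold PTNet.toLTS
    rw [hcomb]
    congr 1
    funext M t M'
    exact propext (htr M t M')
  rw [hLTS] at hb
  exact hb.symm'
end

section
/- Let N = (N₀,M0) be a two-level PT-net system with T = L ∪ H having the property BNDC, and let R be the least relation generated from M0 R M0 by the rules: (i) if M1 R M2 and M2[h⟩M2' with h ∈ H then M1 R M2'; (ii) if M1 R M2, M1[l⟩M1' and M2[l⟩M2' with l ∈ L then M1' R M2'. If M1 and M2 are reachable markings of N\H and of N respectively with M1 R M2, then L(N₀\H, M1) = L(N₀\H, M2). -/
set_option linter.unusedSectionVars false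

section AuxNI
open PTNet
variable {P Tr : Type _} [DecidableEq P] [DecidableEq Tr]

lemma firesSeq_det (N : PTNet P Tr) : ∀ {s : List Tr} {M M' M'' : P → ℕ},
    N.FiresSeq M s M' → N.FiresSeq M s M'' → M' = M''
  | [], _, _, _, h, h' => h.trans h'.symm
  | t :: s, M, M', M'', ⟨Ma, ha, hs⟩, ⟨Mb, hb, hs'⟩ => by
      have : Ma = Mb := ha.2.trans hb.2.symm
      subst this
      exact firesSeq_det N hs hs'

lemma firesSeq_append (N : PTNet P Tr) : ∀ {s1 : List Tr} {M M' M'' : P → ℕ} {s2 : List Tr},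
    N.FiresSeq M s1 M' → N.FiresSeq M' s2 M'' → N.FiresSeq M (s1 ++ s2) M''
  | [], M, M', M'', s2, h, h' => by cases h; exact h'
  | t :: s1, M, M', M'', s2, ⟨Ma, ha, hs⟩, h' => ⟨Ma, ha, firesSeq_append N hs h'⟩

lemma restrict_trans_eq {N : PTNet P Tr} {L H : Finset Tr} (hT : N.transitions = L ∪ H)
    (hLH : Disjoint L H) : (N.restrict H).transitions = L := by
  show N.transitions \ H = L
  rw [hT]
  ext t
  simp only [Finset.mem_sdiff, Finset.mem_union]
  constructor
  · rintro ⟨h1 | h1, h2⟩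
    · exact h1
    · exact absurd h1 h2
  · intro h
    exact ⟨Or.inl h, Finset.disjoint_left.mp hLH h⟩

lemma restrict_fires_iff {N : PTNet P Tr} {H : Finset Tr} {t : Tr}
    (ht : t ∈ N.transitions \ H) {M M' : P → ℕ} :
    (N.restrict H).Fires M t M' ↔ N.Fires M t M' := by
  have hpre : ∀ q, (N.restrict H).pre t q = N.pre t q := fun q => if_pos ht
  have hpost : ∀ q, (N.restrict H).post t q = N.post t q := fun q => if_pos ht
  have hfire : (N.restrict H).fire M t = N.fire M t := by
    funext q; show (if q ∈ N.places then M q + _ - _ else M q) = _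
    rw [hpre, hpost]; rfl
  constructor
  · rintro ⟨⟨_, he⟩, rfl⟩
    refine ⟨⟨(Finset.mem_sdiff.mp ht).1, fun q hq => ?_⟩, hfire⟩
    have := he q hq; rwa [hpre] at this
  · rintro ⟨⟨_, he⟩, rfl⟩
    exact ⟨⟨ht, fun q hq => by rw [hpre]; exact he q hq⟩, hfire.symm⟩

/-- no τ-steps in `N\H`, hence `TauStar` collapses. -/
lemma restrict_taustar_eq {N : PTNet P Tr} {L H : Finset Tr} (hT : N.transitions = L ∪ H)
    (hLH : Disjoint L H) {M0X X X' : P → ℕ}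
    (h : LTS.TauStar ((N.restrict H).toLTS M0X) (↑L) X X') : X' = X := by
  induction h with
  | refl => rfl
  | tail _ step ih =>
      exfalso
      obtain ⟨τ, hτ, htr⟩ := step
      have : τ ∈ (N.restrict H).transitions := htr.1.1
      rw [restrict_trans_eq hT hLH] at this
      exact hτ this

/-- the one-place counter controller net. -/
def ctrl (H : Finset Tr) (p : P) : PTNet P Tr where
  places := {p}
  transitions := H
  pre := fun t q => if t ∈ H ∧ q = p then 1 else 0
  post := fun _ _ => 0
  pre_eq_zero := by intro t ht q; simp [ht]
  post_eq_zero := fun _ _ _ => rfl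

/-- the composed restricted net appearing in BNDC for the counter controller. -/
def NC (N : PTNet P Tr) (H : Finset Tr) (p : P) : PTNet P Tr :=
  (N.comp (ctrl H p)).restrict (H \ (ctrl H p).transitions)

lemma NC_trans {N : PTNet P Tr} {L H : Finset Tr} (hT : N.transitions = L ∪ H) (p : P) :
    (NC N H p).transitions = N.transitions := by
  show ((N.transitions ∪ H) \ (H \ H)) = N.transitions
  rw [Finset.sdiff_self, Finset.sdiff_empty, hT, Finset.union_assoc, Finset.union_self]

/-- `Y` represents net marking `M` together with `m` tokens on the counter. -/
def MRepr (N : PTNet P Tr) (p : P) (Y M : P → ℕ) (m : ℕ) : Prop :=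
  (∀ q ∈ N.places, Y q = M q) ∧ Y p = m

lemma NC_pre {N : PTNet P Tr} {L H : Finset Tr} (hT : N.transitions = L ∪ H)
    {p : P} (hp : p ∉ N.places) {t : Tr} (htN : t ∈ N.transitions) (q : P) :
    (NC N H p).pre t q = (if q ∈ N.places then N.pre t q else if t ∈ H ∧ q = p then 1 else 0) := by
  have ht' : t ∈ (N.comp (ctrl H p)).transitions \ (H \ (ctrl H p).transitions) := by
    show t ∈ (N.transitions ∪ H) \ (H \ H)
    rw [Finset.sdiff_self, Finset.sdiff_empty]
    exact Finset.mem_union_left _ htN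
  show (if _ ∈ _ then (N.comp (ctrl H p)).pre t q else 0) = _
  rw [if_pos ht']
  rfl

lemma NC_post {N : PTNet P Tr} {L H : Finset Tr} (hT : N.transitions = L ∪ H)
    {p : P} (hp : p ∉ N.places) {t : Tr} (htN : t ∈ N.transitions) (q : P) :
    (NC N H p).post t q = (if q ∈ N.places then N.post t q else 0) := by
  have ht' : t ∈ (N.comp (ctrl H p)).transitions \ (H \ (ctrl H p).transitions) := by
    show t ∈ (N.transitions ∪ H) \ (H \ H)
    rw [Finset.sdiff_self, Finset.sdiff_empty]
    exact Finset.mem_union_left _ htN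
  show (if _ ∈ _ then (N.comp (ctrl H p)).post t q else 0) = _
  rw [if_pos ht']
  rfl

lemma NC_places (N : PTNet P Tr) (H : Finset Tr) (p : P) :
    (NC N H p).places = N.places ∪ {p} := rfl

end AuxNI
section AuxNI2
open PTNet
set_option linter.unusedSectionVars false
variable {P Tr : Type _} [DecidableEq P] [DecidableEq Tr]
variable {N : PTNet P Tr} {L H : Finset Tr} {p : P}

/-- characterization of firing in the composed net at a represented marking. -/
lemma NC_fires_char (hT : N.transitions = L ∪ H) (hp : p ∉ N.places)
    {t : Tr} {Y M : P → ℕ} {m : ℕ} (hY : MRepr N p Y M m) {Y' : P → ℕ}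
    (hf : (NC N H p).Fires Y t Y') :
    t ∈ N.transitions ∧ N.Enabled M t ∧ (t ∈ H → 1 ≤ m) ∧
      MRepr N p Y' (N.fire M t) (if t ∈ H then m - 1 else m) := by
  obtain ⟨⟨htr, he⟩, rfl⟩ := hf
  rw [NC_trans hT] at htr
  have hppl : p ∈ (NC N H p).places := Finset.mem_union_right _ (Finset.mem_singleton_self p)
  have hplN : ∀ q ∈ N.places, q ∈ (NC N H p).places := fun q hq => Finset.mem_union_left _ hq
  have hEn : N.Enabled M t := by
    refine ⟨htr, fun q hq => ?_⟩
    have := he q (hplN q hq)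
    rw [NC_pre hT hp htr, if_pos hq, hY.1 q hq] at this
    exact this
  have hm : t ∈ H → 1 ≤ m := by
    intro ht
    have := he p hppl
    rw [NC_pre hT hp htr, if_neg hp, if_pos ⟨ht, rfl⟩, hY.2] at this
    exact this
  refine ⟨htr, hEn, hm, ⟨fun q hq => ?_, ?_⟩⟩
  · show (if q ∈ (NC N H p).places then Y q + _ - _ else Y q) = _
    rw [if_pos (hplN q hq), NC_pre hT hp htr, NC_post hT hp htr, if_pos hq, if_pos hq,
      hY.1 q hq]
    show _ = N.fire M t q
    rw [PTNet.fire, if_pos hq]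
  · show (if p ∈ (NC N H p).places then Y p + _ - _ else Y p) = _
    rw [if_pos hppl, NC_pre hT hp htr, NC_post hT hp htr, if_neg hp, if_neg hp, hY.2]
    by_cases ht : t ∈ H
    · simp [ht]
    · simp [ht]
end AuxNI2
section AuxNI3
open PTNet
set_option linter.unusedSectionVars false
variable {P Tr : Type _} [DecidableEq P] [DecidableEq Tr]
variable {N : PTNet P Tr} {L H : Finset Tr} {p : P}

/-- existence of a composed firing from a represented marking. -/
lemma NC_fires_exists (hT : N.transitions = L ∪ H) (hp : p ∉ N.places)
    {t : Tr} {Y M : P → ℕ} {m : ℕ} (hY : MRepr N p Y M m)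
    (hEn : N.Enabled M t) (hm : t ∈ H → 1 ≤ m) :
    ∃ Y', (NC N H p).Fires Y t Y' ∧
      MRepr N p Y' (N.fire M t) (if t ∈ H then m - 1 else m) := by
  have htr : t ∈ N.transitions := hEn.1
  have hEnc : (NC N H p).Enabled Y t := by
    refine ⟨by rw [NC_trans hT]; exact htr, fun q hq => ?_⟩
    rcases Finset.mem_union.mp hq with hq | hq
    · rw [NC_pre hT hp htr, if_pos hq, hY.1 q hq]
      exact hEn.2 q hq
    · rw [show (ctrl H p).places = {p} from rfl, Finset.mem_singleton] at hq
      subst hq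
      rw [NC_pre hT hp htr, if_neg hp, hY.2]
      by_cases ht : t ∈ H
      · rw [if_pos ⟨ht, rfl⟩]; exact hm ht
      · rw [if_neg (fun h => ht h.1)]; exact Nat.zero_le _
  exact ⟨_, ⟨hEnc, rfl⟩, (NC_fires_char hT hp hY ⟨hEnc, rfl⟩).2.2.2⟩

/-- from a represented marking with empty counter, no unobservable step is possible. -/
lemma NC_no_tau (hT : N.transitions = L ∪ H) (hLH : Disjoint L H) (hp : p ∉ N.places)
    {Y M : P → ℕ} (hY : MRepr N p Y M 0) {t : Tr} (ht : t ∉ L) {Y' : P → ℕ} :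
    ¬ (NC N H p).Fires Y t Y' := by
  intro hf
  obtain ⟨htr, _, hm, _⟩ := NC_fires_char hT hp hY hf
  rw [hT] at htr
  rcases Finset.mem_union.mp htr with h | h
  · exact ht h
  · exact absurd (hm h) (by omega)

lemma NC_taustar_eq (hT : N.transitions = L ∪ H) (hLH : Disjoint L H) (hp : p ∉ N.places)
    {Yinit Y M Y' : P → ℕ} (hY : MRepr N p Y M 0)
    (h : LTS.TauStar (((NC N H p)).toLTS Yinit) (↑L) Y Y') : Y' = Y := by
  rcases Relation.ReflTransGen.cases_head h with rfl | ⟨c, ⟨τ, hτ, htr⟩, _⟩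
  · rfl
  · exact absurd htr (NC_no_tau hT hLH hp hY (fun hh => hτ (Finset.mem_coe.mpr hh)))

/-- extraction of witnessing runs from `RRel`. -/
lemma rrel_extract {M0 : P → ℕ} (hLH : Disjoint L H) {M1 M2 : P → ℕ}
    (hR : RRel N M0 L H M1 M2) :
    ∃ s w : List Tr, (N.restrict H).FiresSeq M0 s M1 ∧ N.FiresSeq M0 w M2 ∧
      w.filter (· ∈ L) = s := by
  induction hR with
  | base => exact ⟨[], [], rfl, rfl, rfl⟩
  | @high Ma Mb Mb' h hh _ hf ih =>
      obtain ⟨s, w, hs, hw, hfil⟩ := ih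
      refine ⟨s, w ++ [h], hs, firesSeq_append N hw ⟨Mb', hf, rfl⟩, ?_⟩
      have : h ∉ L := Finset.disjoint_right.mp hLH hh
      simp [List.filter_append, hfil, this]
  | @low Ma Mb Ma' Mb' l hl _ hf1 hf2 ih =>
      obtain ⟨s, w, hs, hw, hfil⟩ := ih
      refine ⟨s ++ [l], w ++ [l], firesSeq_append (N.restrict H) hs ⟨Ma', hf1, rfl⟩,
        firesSeq_append N hw ⟨Mb', hf2, rfl⟩, ?_⟩
      simp [List.filter_append, hfil, hl]

/-- the composed net can replay any run of `N`, consuming exactly the counter tokens. -/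
lemma NC_run (hT : N.transitions = L ∪ H) (hp : p ∉ N.places) :
    ∀ (w : List Tr) (M M2 Y : P → ℕ), N.FiresSeq M w M2 →
      MRepr N p Y M ((w.filter (· ∈ H)).length) →
      ∃ Y', (NC N H p).FiresSeq Y w Y' ∧ MRepr N p Y' M2 0
  | [], M, M2, Y, h, hY => by cases h; exact ⟨Y, rfl, hY⟩
  | t :: w, M, M2, Y, ⟨Ma, hf, hs⟩, hY => by
      by_cases ht : t ∈ H
      · have hfil : ((t :: w).filter (· ∈ H)).length = (w.filter (· ∈ H)).length + 1 := by
          simp [ht]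
        rw [hfil] at hY
        obtain ⟨Y1, hY1f, hY1⟩ := NC_fires_exists hT hp hY hf.1 (fun _ => by omega)
        rw [if_pos ht, Nat.add_sub_cancel, ← hf.2] at hY1
        obtain ⟨Y', hseq, hrep⟩ := NC_run hT hp w Ma M2 Y1 hs hY1
        exact ⟨Y', ⟨Y1, hY1f, hseq⟩, hrep⟩
      · have hfil : ((t :: w).filter (· ∈ H)).length = (w.filter (· ∈ H)).length := by
          simp [ht]
        rw [hfil] at hY
        obtain ⟨Y1, hY1f, hY1⟩ := NC_fires_exists hT hp hY hf.1 (fun h => absurd h ht)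
        rw [if_neg ht, ← hf.2] at hY1
        obtain ⟨Y', hseq, hrep⟩ := NC_run hT hp w Ma M2 Y1 hs hY1
        exact ⟨Y', ⟨Y1, hY1f, hseq⟩, hrep⟩

end AuxNI3
section AuxNI4
open PTNet
set_option linter.unusedSectionVars false
variable {P Tr : Type _} [DecidableEq P] [DecidableEq Tr]
variable {N : PTNet P Tr} {L H : Finset Tr} {p : P}

/-- transport of the weak bisimulation along a composed run. -/
lemma NC_transport (hT : N.transitions = L ∪ H) (hLH : Disjoint L H) (hp : p ∉ N.places)
    {M0 Y0 : P → ℕ} {B : (P → ℕ) → (P → ℕ) → Prop}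
    (hB : IsWeakBisimulation (↑L) ((N.restrict H).toLTS M0) ((NC N H p).toLTS Y0) B) :
    ∀ (w : List Tr) (X Y Y' : P → ℕ), B X Y → (NC N H p).FiresSeq Y w Y' →
      ∃ X', (N.restrict H).FiresSeq X (w.filter (· ∈ L)) X' ∧ B X' Y'
  | [], X, Y, Y', hXY, h => by cases h; exact ⟨X, rfl, hXY⟩
  | t :: w, X, Y, Y', hXY, ⟨Ym, hf, hs⟩ => by
      by_cases ht : t ∈ L
      · obtain ⟨x1, x2, x3, hst1, htr, hst2, hB'⟩ :=
          ((hB.2.2 Y X hXY).1 t (Finset.mem_coe.mpr ht) Ym hf)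
        have hx1 : x1 = X := restrict_taustar_eq hT hLH hst1
        have hx3 : x3 = x2 := restrict_taustar_eq hT hLH hst2
        subst hx1; subst hx3
        obtain ⟨X', hseq, hBX'⟩ := NC_transport hT hLH hp hB w x3 Ym Y' hB' hs
        refine ⟨X', ?_, hBX'⟩
        have : (t :: w).filter (· ∈ L) = t :: w.filter (· ∈ L) := by simp [ht]
        rw [this]
        exact ⟨x3, htr, hseq⟩
      · obtain ⟨x', hst, hB'⟩ :=
          ((hB.2.2 Y X hXY).2 t (fun hh => ht (Finset.mem_coe.mp hh)) Ym hf)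
        have hx : x' = X := restrict_taustar_eq hT hLH hst
        subst hx
        obtain ⟨X', hseq, hBX'⟩ := NC_transport hT hLH hp hB w x' Ym Y' hB' hs
        refine ⟨X', ?_, hBX'⟩
        have : (t :: w).filter (· ∈ L) = w.filter (· ∈ L) := by simp [ht]
        rw [this]
        exact hseq

/-- at a represented marking with empty counter, the languages coincide. -/
lemma NC_final (hT : N.transitions = L ∪ H) (hLH : Disjoint L H) (hp : p ∉ N.places)
    {M0 Y0 : P → ℕ} {B : (P → ℕ) → (P → ℕ) → Prop}
    (hB : IsWeakBisimulation (↑L) ((N.restrict H).toLTS M0) ((NC N H p).toLTS Y0) B) :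
    ∀ (v : List Tr) (X Y M : P → ℕ), B X Y → MRepr N p Y M 0 →
      ((∃ X', (N.restrict H).FiresSeq X v X') ↔ (∃ M', (N.restrict H).FiresSeq M v M'))
  | [], X, Y, M, hXY, hY => ⟨fun _ => ⟨M, rfl⟩, fun _ => ⟨X, rfl⟩⟩
  | l :: v, X, Y, M, hXY, hY => by
      constructor
      · rintro ⟨X', Xm, hfX, hrest⟩
        have hlt : l ∈ N.transitions \ H := hfX.1.1
        have hl : l ∈ L := by
          have := hlt
          rw [show N.transitions \ H = (N.restrict H).transitions from rfl,
            restrict_trans_eq hT hLH] at this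
          exact this
        obtain ⟨y1, y2, y3, hst1, htr, hst2, hB'⟩ :=
          (hB.1.2 X Y hXY).1 l (Finset.mem_coe.mpr hl) Xm hfX
        have hy1 : y1 = Y := NC_taustar_eq hT hLH hp hY hst1
        subst hy1
        obtain ⟨_, hEn, _, hrep⟩ := NC_fires_char hT hp hY htr
        rw [if_neg (Finset.disjoint_left.mp hLH hl)] at hrep
        have hy3 : y3 = y2 := NC_taustar_eq hT hLH hp hrep hst2
        subst hy3
        have hfM : (N.restrict H).Fires M l (N.fire M l) :=
          (restrict_fires_iff hlt).mpr ⟨hEn, rfl⟩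
        obtain ⟨M', hM'⟩ := (NC_final hT hLH hp hB v Xm y3 (N.fire M l) hB' hrep).mp ⟨X', hrest⟩
        exact ⟨M', N.fire M l, hfM, hM'⟩
      · rintro ⟨M', Mm, hfM, hrest⟩
        have hlt : l ∈ N.transitions \ H := hfM.1.1
        have hl : l ∈ L := by
          have := hlt
          rw [show N.transitions \ H = (N.restrict H).transitions from rfl,
            restrict_trans_eq hT hLH] at this
          exact this
        have hfMN : N.Fires M l Mm := (restrict_fires_iff hlt).mp hfM
        obtain ⟨Y2, hfY, hrep⟩ :=
          NC_fires_exists hT hp hY hfMN.1 (fun h => absurd hl (Finset.disjoint_left.mp hLH · h)) 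
        rw [if_neg (Finset.disjoint_left.mp hLH hl), ← hfMN.2] at hrep
        obtain ⟨x1, x2, x3, hst1, htr, hst2, hB'⟩ :=
          (hB.2.2 Y X hXY).1 l (Finset.mem_coe.mpr hl) Y2 hfY
        have hx1 : x1 = X := restrict_taustar_eq hT hLH hst1
        have hx3 : x3 = x2 := restrict_taustar_eq hT hLH hst2
        subst hx1; subst hx3
        obtain ⟨X', hX'⟩ := (NC_final hT hLH hp hB v x3 Y2 Mm hB' hrep).mpr ⟨M', hrest⟩
        exact ⟨X', x3, htr, hX'⟩

end AuxNI4
/-- if `N` has BNDC and `M1 R M2` for reachable markings `M1` of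
`N \ H` and `M2` of `N`, then `L(N\H, M1) = L(N\H, M2)`. -/
theorem lang_eq_of_rrel_of_bndc
    {P Tr : Type _} [DecidableEq P] [DecidableEq Tr] [Infinite P]
    (N : PTNet P Tr) (M0 : P → ℕ) (L H : Finset Tr)
    (hT : N.transitions = L ∪ H) (hLH : Disjoint L H)
    (hBNDC : BNDC N M0 L H)
    (M1 M2 : P → ℕ)
    (h1 : (N.restrict H).Reachable M0 M1) (h2 : N.Reachable M0 M2)
    (hR : RRel N M0 L H M1 M2) :
    (N.restrict H).freeLang M1 = (N.restrict H).freeLang M2 := by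
  obtain ⟨s, w, hs, hw, hfil⟩ := rrel_extract hLH hR
  set k := (w.filter (· ∈ H)).length with hk
  obtain ⟨p, hp⟩ := Infinite.exists_notMem_finset N.places
  have hdisj1 : Disjoint N.places (ctrl H p).places := by
    show Disjoint N.places ({p} : Finset P)
    exact Finset.disjoint_singleton_right.mpr hp
  have hdisj2 : Disjoint (ctrl H p).transitions L := hLH.symm
  obtain ⟨B, hB⟩ := hBNDC (ctrl H p) (fun _ => k) hdisj1 hdisj2
  have hB : IsWeakBisimulation (↑L) ((N.restrict H).toLTS M0)
      ((NC N H p).toLTS (N.combine M0 fun _ => k)) B := hB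
  have hY0 : MRepr N p (N.combine M0 fun _ => k) M0 k := by
    constructor
    · intro q hq
      show (if q ∈ N.places then M0 q else k) = M0 q
      rw [if_pos hq]
    · show (if p ∈ N.places then M0 p else k) = k
      rw [if_neg hp]
  obtain ⟨Yend, hrun, hrep⟩ := NC_run hT hp w M0 M2 _ hw hY0
  have hBinit : B M0 (N.combine M0 fun _ => k) := hB.1.1
  obtain ⟨X', hseq, hBX'⟩ := NC_transport hT hLH hp hB w M0 _ Yend hBinit hrun
  rw [hfil] at hseq
  have hX1 : X' = M1 := firesSeq_det _ hseq hs
  rw [hX1] at hBX'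
  ext v
  simp only [PTNet.freeLang, Set.mem_setOf_eq]
  exact NC_final hT hLH hp hB v M1 Yend M2 hBX' hrep
end

section
/- A two-level PT-net system N = (N₀,M0) with T = L ∪ H has the property SBNDC if and only if for every reachable marking M1 of N and every high-level transition h ∈ H, M1[h⟩M2 entails L(N₀\H, M1) = L(N₀\H, M2). -/
namespace SBNDCAux

variable {P Tr : Type _} [DecidableEq P] [DecidableEq Tr]
variable {N : PTNet P Tr} {L H : Finset Tr}

lemma trans_eq (hT : N.transitions = L ∪ H) (hLH : Disjoint L H) :
    (N.restrict H).transitions = L := by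
  ext t
  simp only [PTNet.restrict, Finset.mem_sdiff, hT, Finset.mem_union]
  constructor
  · rintro ⟨h1 | h1, h2⟩
    · exact h1
    · exact absurd h1 h2
  · intro h1
    exact ⟨Or.inl h1, fun h2 => Finset.disjoint_left.mp hLH h1 h2⟩

lemma fires_mem (hT : N.transitions = L ∪ H) (hLH : Disjoint L H)
    {M M' : P → ℕ} {t : Tr} (h : (N.restrict H).Fires M t M') : t ∈ L := by
  have := h.1.1
  rwa [trans_eq hT hLH] at this

lemma no_tau (hT : N.transitions = L ∪ H) (hLH : Disjoint L H)
    {Minit M M' : P → ℕ} :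
    ¬ LTS.TauStep ((N.restrict H).toLTS Minit) (↑L) M M' := by
  rintro ⟨τ, hτ, htr⟩
  exact hτ (Finset.mem_coe.mpr (fires_mem hT hLH htr))

lemma taustar_eq (hT : N.transitions = L ∪ H) (hLH : Disjoint L H)
    {Minit M M' : P → ℕ}
    (h : LTS.TauStar ((N.restrict H).toLTS Minit) (↑L) M M') : M' = M := by
  induction h with
  | refl => rfl
  | tail _ hstep _ => exact absurd hstep (no_tau hT hLH)

lemma sim_seq (hT : N.transitions = L ∪ H) (hLH : Disjoint L H)
    {Minit Minit' : P → ℕ} {R : (P → ℕ) → (P → ℕ) → Prop}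
    (hR : IsWeakSimulation (↑L) ((N.restrict H).toLTS Minit)
      ((N.restrict H).toLTS Minit') R) :
    ∀ (s : List Tr) (M M' Mf : P → ℕ), R M M' → (N.restrict H).FiresSeq M s Mf →
      ∃ Mf', (N.restrict H).FiresSeq M' s Mf' ∧ R Mf Mf' := by
  intro s
  induction s with
  | nil =>
    intro M M' Mf hRM hseq
    have e : Mf = M := hseq
    subst e
    exact ⟨M', rfl, hRM⟩
  | cons t s ih =>
    intro M M' Mf hRM hseq
    obtain ⟨M'', hf, hseq'⟩ := hseq
    have htL := fires_mem hT hLH hf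
    obtain ⟨q1'', q2'', q2', hts1, htr, hts2, hR2⟩ :=
      (hR.2 M M' hRM).1 t (Finset.mem_coe.mpr htL) M'' hf
    have e1 : q1'' = M' := taustar_eq hT hLH hts1
    have e2 : q2' = q2'' := taustar_eq hT hLH hts2
    subst e1; subst e2
    obtain ⟨Mf', h1, h2⟩ := ih M'' q2' Mf hR2 hseq'
    exact ⟨Mf', ⟨q2', htr, h1⟩, h2⟩

lemma cons_mem {M M2 : P → ℕ} {σ : Tr}
    (hd : (N.restrict H).Fires M σ M2) (s : List Tr) :
    (σ :: s ∈ (N.restrict H).freeLang M) ↔ s ∈ (N.restrict H).freeLang M2 := by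
  constructor
  · rintro ⟨Mf, M'', hf, hseq⟩
    have e : M'' = M2 := hf.2.trans hd.2.symm
    subst e
    exact ⟨Mf, hseq⟩
  · rintro ⟨Mf, hseq⟩
    exact ⟨Mf, M2, hd, hseq⟩

lemma lang_step (hT : N.transitions = L ∪ H) (hLH : Disjoint L H)
    {q1 q1' : P → ℕ}
    (hR : (N.restrict H).freeLang q1 = (N.restrict H).freeLang q1') :
    ∀ σ ∈ (↑L : Set Tr), ∀ q2, (N.restrict H).Fires q1 σ q2 →
      ∃ q2', (N.restrict H).Fires q1' σ q2' ∧
        (N.restrict H).freeLang q2 = (N.restrict H).freeLang q2' := by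
  intro σ _ q2 hf
  have h1 : [σ] ∈ (N.restrict H).freeLang q1 := ⟨q2, q2, hf, rfl⟩
  rw [hR] at h1
  obtain ⟨Mf, M'', hf', hseq⟩ := h1
  refine ⟨M'', hf', ?_⟩
  ext s
  rw [← cons_mem hf s, ← cons_mem hf' s, hR]

lemma lang_bisim (hT : N.transitions = L ∪ H) (hLH : Disjoint L H)
    {Ma Mb : P → ℕ}
    (he : (N.restrict H).freeLang Ma = (N.restrict H).freeLang Mb) :
    WeaklyBisimilar (↑L) ((N.restrict H).toLTS Ma) ((N.restrict H).toLTS Mb) := by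
  refine ⟨fun M M' => (N.restrict H).freeLang M = (N.restrict H).freeLang M',
    ⟨he, ?_⟩, he, ?_⟩
  · intro q1 q1' hR
    refine ⟨?_, ?_⟩
    · intro σ hσ q2 hf
      obtain ⟨q2', hf', he2⟩ := lang_step hT hLH hR σ hσ q2 hf
      exact ⟨q1', q2', q2', Relation.ReflTransGen.refl, hf',
        Relation.ReflTransGen.refl, he2⟩
    · intro τ hτ q2 hf
      exact absurd (Finset.mem_coe.mpr (fires_mem hT hLH hf)) hτ
  · intro q1 q1' hR
    refine ⟨?_, ?_⟩
    · intro σ hσ q2 hf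
      obtain ⟨q2', hf', he2⟩ := lang_step hT hLH hR.symm σ hσ q2 hf
      exact ⟨q1', q2', q2', Relation.ReflTransGen.refl, hf',
        Relation.ReflTransGen.refl, he2.symm⟩
    · intro τ hτ q2 hf
      exact absurd (Finset.mem_coe.mpr (fires_mem hT hLH hf)) hτ

end SBNDCAux

/-- `N` has SBNDC iff for every reachable marking `M1` and every
`h ∈ H`, `M1[h⟩M2` entails `L(N\H, M1) = L(N\H, M2)`. -/
theorem sbndc_iff_lang_eq
    {P Tr : Type _} [DecidableEq P] [DecidableEq Tr]
    (N : PTNet P Tr) (M0 : P → ℕ) (L H : Finset Tr)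
    (hT : N.transitions = L ∪ H) (hLH : Disjoint L H) :
    SBNDC N M0 L H ↔
      ∀ M1 h M2, N.Reachable M0 M1 → h ∈ H → N.Fires M1 h M2 →
        (N.restrict H).freeLang M1 = (N.restrict H).freeLang M2 := by
  constructor
  · intro hS M1 h M2 hreach hh hf
    obtain ⟨R, hR1, hR2⟩ := hS M1 h M2 hreach hh hf
    ext s
    constructor
    · rintro ⟨Mf, hseq⟩
      obtain ⟨Mf', h1, _⟩ := SBNDCAux.sim_seq hT hLH hR1 s M1 M2 Mf hR1.1 hseq
      exact ⟨Mf', h1⟩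
    · rintro ⟨Mf, hseq⟩
      obtain ⟨Mf', h1, _⟩ := SBNDCAux.sim_seq hT hLH hR2 s M2 M1 Mf hR2.1 hseq
      exact ⟨Mf', h1⟩
  · intro hl M1 h M2 hreach hh hf
    exact SBNDCAux.lang_bisim hT hLH (hl M1 h M2 hreach hh hf)
end
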